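/- Let h₁, h₂ be monotone functions on a complete lattice, with h₁ continuous (preserving all suprema). If h₁ ∘ h₂ ≤ h₂* ∘ h₁ pointwise, then h₁* ∘ h₂* ≤ h₂* ∘ h₁* pointwise. -/
import Mathlib


def IsClosure {L : Type*} [CompleteLattice L] (c : L → L) : Prop :=
  Monotone c ∧ (∀ x, x ≤ c x) ∧ (∀ x, c (c x) ≤ c x)

def IsLeastClosureAbove {L : Type*} [CompleteLattice L] (k c : L → L) : Prop :=
  IsClosure c ∧ (∀ x, k x ≤ c x) ∧
    ∀ d, IsClosure d → (∀ x, k x ≤ d x) → ∀ x, c x ≤ d x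

/-- If h₁ is continuous and h₁ ∘ h₂ ≤ h₂* ∘ h₁ then h₁* ∘ h₂* ≤ h₂* ∘ h₁*. -/
theorem stmt10 {L : Type*} [CompleteLattice L] (h₁ h₂ hs₁ hs₂ : L → L)
    (hcont₁ : ∀ S : Set L, h₁ (sSup S) = ⨆ x ∈ S, h₁ x)
    (hm₂ : Monotone h₂)
    (hls₁ : IsLeastClosureAbove h₁ hs₁) (hls₂ : IsLeastClosureAbove h₂ hs₂)
    (hyp : ∀ x, h₁ (h₂ x) ≤ hs₂ (h₁ x)) :
    ∀ x, hs₁ (hs₂ x) ≤ hs₂ (hs₁ x) := by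
  obtain ⟨⟨hm1c, hle1, hid1⟩, hk1, hlst1⟩ := hls₁
  obtain ⟨⟨hm2c, hle2, hid2⟩, hk2, hlst2⟩ := hls₂
  -- h₁ is monotone
  have hm₁ : Monotone h₁ := by
    intro x y hxy
    have h := hcont₁ {x, y}
    rw [sSup_pair, sup_eq_right.mpr hxy, iSup_pair] at h
    rw [h]; exact le_sup_left
  -- Key lemma: h₁ ∘ hs₂ ≤ hs₂ ∘ h₁
  have keyA : ∀ x, h₁ (hs₂ x) ≤ hs₂ (h₁ x) := by
    intro x
    set d : L → L := fun z => sSup {y | h₁ y ≤ hs₂ (h₁ z)} with hd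
    have hdh : ∀ z, h₁ (d z) ≤ hs₂ (h₁ z) := by
      intro z
      rw [hd]
      simp only
      rw [hcont₁]
      exact iSup₂_le fun y hy => hy
    have hdclo : IsClosure d := by
      refine ⟨?_, ?_, ?_⟩
      · intro a b hab
        exact sSup_le_sSup fun y hy => le_trans hy (hm2c (hm₁ hab))
      · intro z
        exact le_sSup (hle2 (h₁ z))
      · intro z
        refine sSup_le fun y hy => le_sSup ?_
        exact le_trans hy (le_trans (hm2c (hdh z)) (hid2 (h₁ z)))
    have hk2d : ∀ z, h₂ z ≤ d z := fun z => le_sSup (hyp z)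
    calc h₁ (hs₂ x) ≤ h₁ (d x) := hm₁ (hlst2 d hdclo hk2d x)
      _ ≤ hs₂ (h₁ x) := hdh x
  -- the iterate closure above h₁
  set g : L → L := fun y => y ⊔ h₁ y with hg
  have hmg : Monotone g := fun a b hab => sup_le_sup hab (hm₁ hab)
  set c : L → L := fun z => ⨆ n, g^[n] z with hc
  have hidc : ∀ z, z ≤ c z := fun z => le_iSup (fun n => g^[n] z) 0
  have h1cz : ∀ z, h₁ (c z) ≤ c z := by
    intro z
    have he : h₁ (c z) = ⨆ n, h₁ (g^[n] z) := by
      rw [hc]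
      simp only
      rw [show (⨆ n, g^[n] z) = sSup (Set.range fun n => g^[n] z) by rw [sSup_range],
        hcont₁, iSup_range]
    rw [he]
    refine iSup_le fun n => ?_
    have : h₁ (g^[n] z) ≤ g^[n+1] z := by
      rw [Function.iterate_succ_apply']
      exact le_sup_right
    exact le_trans this (le_iSup (fun n => g^[n] z) (n + 1))
  have hgcz : ∀ z, g (c z) ≤ c z := fun z => sup_le le_rfl (h1cz z)
  have hcclo : IsClosure c := by
    refine ⟨?_, hidc, ?_⟩
    · intro a b hab
      exact iSup_mono fun n => (hmg.iterate n) hab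
    · intro z
      refine iSup_le fun n => ?_
      induction n with
      | zero => simp
      | succ n ih =>
        rw [Function.iterate_succ_apply']
        exact le_trans (hmg ih) (hgcz z)
  have hk1c : ∀ z, h₁ z ≤ c z := by
    intro z
    have : h₁ z ≤ g^[1] z := by simp [hg]
    exact le_trans this (le_iSup (fun n => g^[n] z) 1)
  have hsc : ∀ z, hs₁ z ≤ c z := hlst1 c hcclo hk1c
  -- main induction
  intro x
  have step : ∀ y, y ≤ hs₂ (hs₁ x) → g y ≤ hs₂ (hs₁ x) := by
    intro y hy
    refine sup_le hy ?_
    calc h₁ y ≤ h₁ (hs₂ (hs₁ x)) := hm₁ hy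
      _ ≤ hs₂ (h₁ (hs₁ x)) := keyA _
      _ ≤ hs₂ (hs₁ (hs₁ x)) := hm2c (hk1 _)
      _ ≤ hs₂ (hs₁ x) := hm2c (hid1 x)
  have iter : ∀ n, g^[n] (hs₂ x) ≤ hs₂ (hs₁ x) := by
    intro n
    induction n with
    | zero => simpa using hm2c (hle1 x)
    | succ n ih =>
      rw [Function.iterate_succ_apply']
      exact step _ ih
  calc hs₁ (hs₂ x) ≤ c (hs₂ x) := hsc _
    _ ≤ hs₂ (hs₁ x) := iSup_le iter
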